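/- A matrix is totally equimodular if and only if every matrix obtained from it by any finite sequence of pivots and trims is totally equimodular. -/

import Mathlib

/-- All the nonzero maximal (m×m) subdeterminants of `A` have the same absolute value. -/
def Equimodular {m n : ℕ} (A : Matrix (Fin m) (Fin n) ℚ) : Prop :=
  ∃ d : ℚ, ∀ g : Fin m ↪ Fin n,
    (A.submatrix id g).det ≠ 0 → |(A.submatrix id g).det| = d

/-- Every set of linearly independent rows of `A` forms an equimodular matrix. -/
def TotallyEquimodular {m n : ℕ} (A : Matrix (Fin m) (Fin n) ℚ) : Prop :=
  ∀ (k : ℕ) (e : Fin k ↪ Fin m),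
    LinearIndependent ℚ (fun i => A (e i)) → Equimodular (A.submatrix e id)

/-- Gaussian pivot of `A` at position `(i, j)`. -/
def pivotAt {m n : ℕ} (A : Matrix (Fin m) (Fin n) ℚ) (i : Fin m) (j : Fin n) :
    Matrix (Fin m) (Fin n) ℚ :=
  Matrix.of fun r c => if r = i then A i c / A i j else A r c - A r j / A i j * A i c

/-- Trim of `A` at `(i, j)`: pivot at `(i, j)`, then delete row `i` and column `j`. -/
def trimAt {m n : ℕ} (A : Matrix (Fin (m + 1)) (Fin (n + 1)) ℚ)
    (i : Fin (m + 1)) (j : Fin (n + 1)) : Matrix (Fin m) (Fin n) ℚ :=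
  (pivotAt A i j).submatrix i.succAbove j.succAbove

lemma pivot_det {m n k : ℕ} (A : Matrix (Fin m) (Fin n) ℚ) (i : Fin m) (j : Fin n)
    (e : Fin k → Fin m) (he : Function.Injective e) (a0 : Fin k) (ha0 : e a0 = i)
    (g : Fin k → Fin n) :
    ((pivotAt A i j).submatrix e g).det = (A i j)⁻¹ * (A.submatrix e g).det := by
  classical
  set M := A.submatrix e g with hM
  have key : ((pivotAt A i j).submatrix e g).det
      = (Matrix.updateRow M a0 ((A i j)⁻¹ • M a0)).det := by
    apply Matrix.det_eq_of_forall_row_eq_smul_add_const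
      (fun a => if a = a0 then 0 else -(A (e a) j)) a0 (if_pos rfl)
    intro a c
    by_cases h : a = a0
    · subst h
      simp [Matrix.updateRow_self, pivotAt, ha0, hM, Matrix.submatrix_apply,
        div_eq_inv_mul]
    · have he' : e a ≠ i := fun hh => h (he (hh.trans ha0.symm))
      simp only [Matrix.submatrix_apply, pivotAt, Matrix.of_apply, he', if_neg,
        Matrix.updateRow_ne h, Matrix.updateRow_self, Pi.smul_apply, smul_eq_mul,
        if_neg h, hM, ha0, if_false]
      ring
  rw [key, Matrix.det_updateRow_smul, Matrix.updateRow_eq_self]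

lemma pivot_li {m n k : ℕ} (A : Matrix (Fin m) (Fin n) ℚ) (i : Fin m) (j : Fin n)
    (hA : A i j ≠ 0) (e : Fin k → Fin m) (he : Function.Injective e)
    (a0 : Fin k) (ha0 : e a0 = i)
    (h : LinearIndependent ℚ (fun a => pivotAt A i j (e a))) :
    LinearIndependent ℚ (fun a => A (e a)) := by
  classical
  rw [Fintype.linearIndependent_iff] at h ⊢
  intro g hg
  set s : ℚ := ∑ b, g b * A (e b) j with hs
  set g' : Fin k → ℚ := fun a => if a = a0 then s else g a with hg'
  have hgc : ∀ c, ∑ a, g a * A (e a) c = 0 := by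
    intro c
    have := congrFun hg c
    simpa using this
  have hsum : ∑ a, g' a • (fun a => pivotAt A i j (e a)) a = 0 := by
    funext c
    simp only [Finset.sum_apply, Pi.smul_apply, smul_eq_mul, Pi.zero_apply]
    have expand : ∀ a, g' a * pivotAt A i j (e a) c =
        (if a = a0 then s * (A i c / A i j)
          else g a * A (e a) c - g a * A (e a) j * (A i c / A i j)) := by
      intro a
      by_cases ha : a = a0
      · subst ha
        simp [hg', pivotAt, ha0, div_eq_mul_inv]
      · have he' : e a ≠ i := fun hh => ha (he (hh.trans ha0.symm))
        simp [hg', ha, pivotAt, he']; ring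
    rw [Finset.sum_congr rfl (fun a _ => expand a)]
    rw [← Finset.add_sum_erase _ _ (Finset.mem_univ a0), if_pos rfl]
    have h1 : ∀ a ∈ Finset.univ.erase a0,
        (if a = a0 then s * (A i c / A i j)
          else g a * A (e a) c - g a * A (e a) j * (A i c / A i j))
        = g a * A (e a) c - g a * A (e a) j * (A i c / A i j) := by
      intro a ha
      rw [if_neg (Finset.mem_erase.mp ha).1]
    rw [Finset.sum_congr rfl h1, Finset.sum_sub_distrib, ← Finset.sum_mul]
    have hs2 : s = g a0 * A i j + ∑ a ∈ Finset.univ.erase a0, g a * A (e a) j := by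
      rw [hs, ← Finset.add_sum_erase _ _ (Finset.mem_univ a0), ha0]
    have h0 : g a0 * A i c + ∑ a ∈ Finset.univ.erase a0, g a * A (e a) c = 0 := by
      rw [← hgc c, ← Finset.add_sum_erase _ (fun a => g a * A (e a) c) (Finset.mem_univ a0), ha0]
    rw [hs2]
    have hsplit : ∑ x, g x * A (e x) c
        = g a0 * A (e a0) c + ∑ x ∈ Finset.univ.erase a0, g x * A (e x) c :=
      (Finset.add_sum_erase _ _ (Finset.mem_univ a0)).symm
    field_simp
    linear_combination A i j * h0
  have hz := h g' hsum
  intro a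
  by_cases ha : a = a0
  · have hs0 : s = 0 := by simpa [hg'] using hz a0
    have hsa : s = g a0 * A i j := by
      rw [hs, Finset.sum_eq_single a0, ha0]
      · intro b _ hb
        have hgb : g b = 0 := by simpa [hg', hb] using hz b
        rw [hgb, zero_mul]
      · simp
    rcases mul_eq_zero.mp (hsa.symm.trans hs0) with h' | h'
    · rw [ha]; exact h'
    · exact absurd h' hA
  · simpa [hg', ha] using hz a

lemma pivot_te {m n : ℕ} (A : Matrix (Fin m) (Fin n) ℚ) (i : Fin m) (j : Fin n)
    (hA : A i j ≠ 0) (hTE : TotallyEquimodular A) :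
    TotallyEquimodular (pivotAt A i j) := by
  classical
  intro k e hli
  by_cases hi : ∃ a0, e a0 = i
  · obtain ⟨a0, ha0⟩ := hi
    have hliA := pivot_li A i j hA e e.injective a0 ha0 hli
    obtain ⟨d, hd⟩ := hTE k e hliA
    refine ⟨|(A i j)⁻¹| * d, ?_⟩
    intro g hg
    have hdet := pivot_det A i j e e.injective a0 ha0 g
    have hsub : ((pivotAt A i j).submatrix e id).submatrix id g
        = (pivotAt A i j).submatrix e g := by
      simp [Matrix.submatrix_submatrix]
    have hsubA : (A.submatrix e id).submatrix id g = A.submatrix e g := by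
      simp [Matrix.submatrix_submatrix]
    rw [hsub] at hg ⊢
    rw [hdet] at hg ⊢
    have hAdet : (A.submatrix e g).det ≠ 0 := by
      intro h0; rw [h0, mul_zero] at hg; exact hg rfl
    rw [abs_mul]
    have := hd g (by rwa [hsubA])
    rw [hsubA] at this
    rw [this]
  · push_neg at hi
    set P := pivotAt A i j with hP
    -- extend e by i
    have hPij : P i j = 1 := by simp [hP, pivotAt, div_self hA]
    have hPzero : ∀ a, P (e a) j = 0 := by
      intro a
      simp only [hP, pivotAt, Matrix.of_apply, if_neg (hi a)]
      field_simp
      ring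
    set e' : Fin (k + 1) → Fin m := Fin.snoc e i with he'
    have he'inj : Function.Injective e' := by
      intro a b hab
      induction a using Fin.lastCases with
      | last =>
        induction b using Fin.lastCases with
        | last => rfl
        | cast b =>
          rw [he'] at hab
          simp only [Fin.snoc_last, Fin.snoc_castSucc] at hab
          exact absurd hab.symm (hi b)
      | cast a =>
        induction b using Fin.lastCases with
        | last =>
          rw [he'] at hab
          simp only [Fin.snoc_last, Fin.snoc_castSucc] at hab
          exact absurd hab (hi a)
        | cast b =>
          rw [he'] at hab
          simp only [Fin.snoc_castSucc] at hab
          exact congrArg Fin.castSucc (e.injective hab)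
    have ha0' : e' (Fin.last k) = i := by rw [he']; exact Fin.snoc_last _ _
    -- linear independence of the extended pivoted rows
    have hliP' : LinearIndependent ℚ (fun a => P (e' a)) := by
      have hcomp : (fun a => P (e' a)) = Fin.snoc (fun a => P (e a)) (P i) := by
        funext a
        induction a using Fin.lastCases with
        | last => rw [ha0', Fin.snoc_last]
        | cast a =>
          have : e' (Fin.castSucc a) = e a := by rw [he']; exact Fin.snoc_castSucc _ _ _
          rw [this, Fin.snoc_castSucc]
      rw [hcomp, linearIndependent_fin_snoc]
      refine ⟨hli, ?_⟩
      intro hmem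
      have hker : Submodule.span ℚ (Set.range fun a => P (e a))
          ≤ LinearMap.ker (LinearMap.proj (R := ℚ) (φ := fun _ : Fin n => ℚ) j) := by
        rw [Submodule.span_le]
        rintro v ⟨a, rfl⟩
        simp [LinearMap.mem_ker, hPzero a]
      have := hker hmem
      rw [LinearMap.mem_ker] at this
      simp only [LinearMap.proj_apply] at this
      rw [hPij] at this
      exact one_ne_zero this
    have hliA' := pivot_li A i j hA e' he'inj (Fin.last k) ha0' hliP'
    obtain ⟨d, hd⟩ := hTE (k + 1) ⟨e', he'inj⟩ hliA'
    refine ⟨|(A i j)⁻¹| * d, ?_⟩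
    intro g hg
    have hsub : ((pivotAt A i j).submatrix e id).submatrix id g
        = P.submatrix e g := by
      simp [Matrix.submatrix_submatrix, hP]
    rw [hsub] at hg ⊢
    -- the column j is not hit by g
    have hgj : ∀ b, g b ≠ j := by
      intro b hb
      apply hg
      apply Matrix.det_eq_zero_of_column_eq_zero b
      intro a
      simp only [Matrix.submatrix_apply, hb]
      exact hPzero a
    set g' : Fin (k + 1) → Fin n := Fin.snoc g j with hg'
    have hg'inj : Function.Injective g' := by
      intro a b hab
      induction a using Fin.lastCases with
      | last =>
        induction b using Fin.lastCases with
        | last => rfl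
        | cast b =>
          rw [hg'] at hab
          simp only [Fin.snoc_last, Fin.snoc_castSucc] at hab
          exact absurd hab.symm (hgj b)
      | cast a =>
        induction b using Fin.lastCases with
        | last =>
          rw [hg'] at hab
          simp only [Fin.snoc_last, Fin.snoc_castSucc] at hab
          exact absurd hab (hgj a)
        | cast b =>
          rw [hg'] at hab
          simp only [Fin.snoc_castSucc] at hab
          exact congrArg Fin.castSucc (g.injective hab)
    -- determinant of extended matrix equals determinant of original
    have hdet1 : (P.submatrix e' g').det = (P.submatrix e g).det := by
      rw [Matrix.det_succ_column (P.submatrix e' g') (Fin.last k)]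
      rw [Finset.sum_eq_single (Fin.last k)]
      · have h1 : (P.submatrix e' g') (Fin.last k) (Fin.last k) = 1 := by
          simp only [Matrix.submatrix_apply, ha0']
          rw [hg', Fin.snoc_last]
          exact hPij
        rw [h1]
        have h2 : (P.submatrix e' g').submatrix (Fin.last k).succAbove (Fin.last k).succAbove
            = P.submatrix e g := by
          ext a b
          simp only [Matrix.submatrix_apply, Fin.succAbove_last_apply]
          congr 1
          · rw [he']; exact Fin.snoc_castSucc _ _ _
          · rw [hg']; exact Fin.snoc_castSucc _ _ _
        rw [h2]
        have : ((-1 : ℚ)) ^ ((Fin.last k : ℕ) + (Fin.last k : ℕ)) = 1 := by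
          rw [← two_mul, pow_mul]
          norm_num
        rw [this, one_mul, one_mul]
      · intro a _ ha
        have : (P.submatrix e' g') a (Fin.last k) = 0 := by
          induction a using Fin.lastCases with
          | last => exact absurd rfl ha
          | cast a =>
            simp only [Matrix.submatrix_apply]
            have h3 : e' (Fin.castSucc a) = e a := by rw [he']; exact Fin.snoc_castSucc _ _ _
            have h4 : g' (Fin.last k) = j := by rw [hg']; exact Fin.snoc_last _ _
            rw [h3, h4]
            exact hPzero a
        rw [this, mul_zero, zero_mul]
      · intro h; exact absurd (Finset.mem_univ _) h
    have hdet2 := pivot_det A i j e' he'inj (Fin.last k) ha0' g'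
    rw [← hdet1, hdet2] at hg ⊢
    have hAdet : (A.submatrix e' g').det ≠ 0 := by
      intro h0; rw [h0, mul_zero] at hg; exact hg rfl
    rw [abs_mul]
    have hds := hd ⟨g', hg'inj⟩ (by
      have : (A.submatrix (⇑(⟨e', he'inj⟩ : Fin (k+1) ↪ Fin m)) id).submatrix id
          (⇑(⟨g', hg'inj⟩ : Fin (k+1) ↪ Fin n)) = A.submatrix e' g' := by
        simp [Matrix.submatrix_submatrix]
      rwa [this])
    have hrw : (A.submatrix (⇑(⟨e', he'inj⟩ : Fin (k+1) ↪ Fin m)) id).submatrix id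
        (⇑(⟨g', hg'inj⟩ : Fin (k+1) ↪ Fin n)) = A.submatrix e' g' := by
      simp [Matrix.submatrix_submatrix]
    rw [hrw] at hds
    rw [hds]

lemma trim_te {m n : ℕ} (A : Matrix (Fin (m + 1)) (Fin (n + 1)) ℚ)
    (i : Fin (m + 1)) (j : Fin (n + 1)) (hA : A i j ≠ 0)
    (hTE : TotallyEquimodular A) : TotallyEquimodular (trimAt A i j) := by
  classical
  have hP := pivot_te A i j hA hTE
  intro k e hli
  set e2 : Fin k ↪ Fin (m + 1) :=
    e.trans ⟨i.succAbove, Fin.succAbove_right_injective⟩ with he2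
  have hli2 : LinearIndependent ℚ (fun a => (pivotAt A i j) (e2 a)) := by
    apply LinearIndependent.of_comp (LinearMap.funLeft ℚ ℚ j.succAbove)
    have : (⇑(LinearMap.funLeft ℚ ℚ j.succAbove) ∘ fun a => (pivotAt A i j) (e2 a))
        = fun a => (trimAt A i j) (e a) := by
      funext a
      rfl
    rw [this]
    exact hli
  obtain ⟨d, hd⟩ := hP k e2 hli2
  refine ⟨d, ?_⟩
  intro g hg
  set g2 : Fin k ↪ Fin (n + 1) :=
    g.trans ⟨j.succAbove, Fin.succAbove_right_injective⟩ with hg2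
  have hrw : (((pivotAt A i j).submatrix (⇑e2) id).submatrix id ⇑g2)
      = ((trimAt A i j).submatrix (⇑e) id).submatrix id ⇑g := by
    ext a b
    rfl
  have := hd g2
  rw [hrw] at this
  exact this hg

/-- `PTSeq A B` : `B` is obtained from `A` by a finite sequence of pivots and trims. -/
inductive PTSeq : (Σ m n : ℕ, Matrix (Fin m) (Fin n) ℚ) →
    (Σ m n : ℕ, Matrix (Fin m) (Fin n) ℚ) → Prop
  | refl (A : Σ m n : ℕ, Matrix (Fin m) (Fin n) ℚ) : PTSeq A A
  | pivot {m n : ℕ} {B : Σ m n : ℕ, Matrix (Fin m) (Fin n) ℚ}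
      (A : Matrix (Fin m) (Fin n) ℚ) (i : Fin m) (j : Fin n) (h : A i j ≠ 0)
      (hrec : PTSeq ⟨m, n, pivotAt A i j⟩ B) : PTSeq ⟨m, n, A⟩ B
  | trim {m n : ℕ} {B : Σ m n : ℕ, Matrix (Fin m) (Fin n) ℚ}
      (A : Matrix (Fin (m + 1)) (Fin (n + 1)) ℚ) (i : Fin (m + 1)) (j : Fin (n + 1))
      (h : A i j ≠ 0) (hrec : PTSeq ⟨m, n, trimAt A i j⟩ B) : PTSeq ⟨m + 1, n + 1, A⟩ B

theorem stmt4 {m n : ℕ} (A : Matrix (Fin m) (Fin n) ℚ) :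
    TotallyEquimodular A ↔
      ∀ B : Σ m n : ℕ, Matrix (Fin m) (Fin n) ℚ,
        PTSeq ⟨m, n, A⟩ B → TotallyEquimodular B.2.2 := by
  constructor
  · intro hA B hB
    have key : ∀ (X B : Σ m n : ℕ, Matrix (Fin m) (Fin n) ℚ), PTSeq X B →
        TotallyEquimodular X.2.2 → TotallyEquimodular B.2.2 := by
      intro X B h
      induction h with
      | refl => exact id
      | pivot A i j hij hrec ih => exact fun hte => ih (pivot_te _ _ _ hij hte)
      | trim A i j hij hrec ih => exact fun hte => ih (trim_te _ _ _ hij hte)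
    exact key _ _ hB hA
  · intro h
    exact h ⟨m, n, A⟩ (PTSeq.refl _)
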